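/- Let A be an n×n real symmetric matrix with nonnegative entries and zero diagonal (the adjacency matrix of a simple undirected graph), and let β > 0 and δ > 0 be real constants with λ₁(A) < δ/β, where λ₁(A) denotes the largest eigenvalue of A. Let p : ℝ → ℝⁿ be a differentiable function satisfying, for all t ≥ 0 and all i, dp_i/dt = (1 − p_i(t)) β ∑_{j=1}^n a_{ij} p_j(t) − δ p_i(t), with p_i(t) ∈ [0,1] for all i and all t ≥ 0. Then there exist ε > 0 and α > 0 such that ‖p(t)‖ ≤ α ‖p(0)‖ e^{−εt} for all t ≥ 0, where ‖·‖ is the Euclidean norm; in particular the initial infection converges to zero exponentially fast. -/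

import Mathlib

open Matrix in
lemma rayleigh_bound {n : ℕ} (A : Matrix (Fin n) (Fin n) ℝ) (hA : A.IsHermitian) {μ : ℝ}
    (h : ∀ i, hA.eigenvalues i ≤ μ) (x : Fin n → ℝ) :
    x ⬝ᵥ A *ᵥ x ≤ μ * (x ⬝ᵥ x) := by
  classical
  set U : Matrix (Fin n) (Fin n) ℝ := (hA.eigenvectorUnitary : Matrix (Fin n) (Fin n) ℝ) with hUdef
  have hU : U * star U = 1 := Matrix.mem_unitaryGroup_iff.mp hA.eigenvectorUnitary.2
  have key : μ • (1 : Matrix (Fin n) (Fin n) ℝ) - A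
      = U * Matrix.diagonal (fun i => μ - hA.eigenvalues i) * star U := by
    have hd : Matrix.diagonal (fun i : Fin n => μ - hA.eigenvalues i)
        = μ • (1 : Matrix (Fin n) (Fin n) ℝ)
          - Matrix.diagonal (RCLike.ofReal ∘ hA.eigenvalues) := by
      ext i j
      by_cases hij : i = j <;>
        simp [Matrix.diagonal, hij, Matrix.one_apply, RCLike.ofReal]
    rw [hd, Matrix.mul_sub, Matrix.sub_mul]
    have h1 : U * (μ • (1 : Matrix (Fin n) (Fin n) ℝ)) * star U
        = μ • (1 : Matrix (Fin n) (Fin n) ℝ) := by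
      rw [Matrix.mul_smul, Matrix.mul_one, Matrix.smul_mul, hU]
    rw [h1]
    congr 1
    exact hA.spectral_theorem
  have hM : (μ • (1 : Matrix (Fin n) (Fin n) ℝ) - A).PosSemidef := by
    rw [key]
    have := (Matrix.posSemidef_diagonal_iff.mpr
      (fun i => sub_nonneg.mpr (h i))).mul_mul_conjTranspose_same U
    rwa [Matrix.star_eq_conjTranspose]
  have h2 := hM.dotProduct_mulVec_nonneg x
  rw [star_trivial, Matrix.sub_mulVec, Matrix.smul_mulVec, Matrix.one_mulVec,
    dotProduct_sub, dotProduct_smul] at h2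
  have hs : μ • (x ⬝ᵥ x) = μ * (x ⬝ᵥ x) := rfl
  linarith [h2, hs ▸ h2]


/-- **Exponential stability of the homogeneous N-intertwined SIS model.**
If `A` is the adjacency matrix of a simple undirected graph (symmetric, nonnegative,
zero diagonal), `β > 0`, `δ > 0`, and the largest eigenvalue of `A` satisfies
`λ₁(A) < δ/β` (i.e., every eigenvalue of the real symmetric matrix `A` is below
`δ/β`), then any solution `p` of the SIS dynamics with values in `[0,1]ⁿ`
converges to zero exponentially fast. -/
theorem sis_homogeneous_exponential_stability
    {n : ℕ} (A : Matrix (Fin n) (Fin n) ℝ)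
    (hA : A.IsHermitian) (hAnonneg : ∀ i j, 0 ≤ A i j) (hAdiag : ∀ i, A i i = 0)
    (β δ : ℝ) (hβ : 0 < β) (hδ : 0 < δ)
    (hspec : ∀ i, hA.eigenvalues i < δ / β)
    (p : ℝ → EuclideanSpace ℝ (Fin n))
    (hode : ∀ t ≥ (0 : ℝ), ∀ i, HasDerivAt (fun s => p s i)
      ((1 - p t i) * β * (∑ j, A i j * p t j) - δ * p t i) t)
    (hrange : ∀ t ≥ (0 : ℝ), ∀ i, p t i ∈ Set.Icc (0 : ℝ) 1) :
    ∃ ε > (0 : ℝ), ∃ α > (0 : ℝ), ∀ t ≥ (0 : ℝ),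
      ‖p t‖ ≤ α * ‖p 0‖ * Real.exp (-ε * t) := by
  classical
  -- trivial case n = 0
  rcases Nat.eq_zero_or_pos n with hn | hn
  · refine ⟨1, one_pos, 1, one_pos, fun t ht => ?_⟩
    subst hn
    have h0 : ∀ s : ℝ, ‖p s‖ = 0 := by
      intro s
      rw [EuclideanSpace.norm_eq]
      simp
    rw [h0, h0]
    positivity
  -- largest eigenvalue
  have hne : (Finset.univ : Finset (Fin n)).Nonempty := ⟨⟨0, hn⟩, Finset.mem_univ _⟩
  set μ : ℝ := Finset.univ.sup' hne hA.eigenvalues with hμdef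
  have hμle : ∀ i, hA.eigenvalues i ≤ μ := fun i =>
    Finset.le_sup' _ (Finset.mem_univ i)
  have hμlt : μ < δ / β := by
    obtain ⟨i, -, hi⟩ := Finset.exists_mem_eq_sup' hne hA.eigenvalues
    rw [hμdef, hi]; exact hspec i
  set ε : ℝ := δ - β * μ with hεdef
  have hε : 0 < ε := by
    have : β * μ < δ := by
      have := (lt_div_iff₀' hβ).mp hμlt
      linarith
    linarith
  refine ⟨ε, hε, 1, one_pos, fun t ht => ?_⟩
  -- the Lyapunov function V = ∑ pᵢ²
  set V : ℝ → ℝ := fun s => ∑ i, (p s i) ^ 2 with hVdef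
  set W : ℝ → ℝ := fun s => ∑ i, 2 * p s i *
    ((1 - p s i) * β * (∑ j, A i j * p s j) - δ * p s i) with hWdef
  have hnorm : ∀ s : ℝ, ‖p s‖ = Real.sqrt (V s) := by
    intro s
    rw [EuclideanSpace.norm_eq]
    congr 1
    exact Finset.sum_congr rfl fun i _ => by rw [Real.norm_eq_abs, sq_abs]
  have hVnonneg : ∀ s, 0 ≤ V s := fun s => Finset.sum_nonneg fun i _ => sq_nonneg _
  have hVderiv : ∀ s ≥ (0 : ℝ), HasDerivAt V (W s) s := by
    intro s hs
    apply HasDerivAt.fun_sum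
    intro i _
    have h := (hode s hs i).pow 2
    convert h using 1
    · rfl
    · rfl
    · ring
  -- the key differential inequality
  have hbound : ∀ s ≥ (0 : ℝ), W s ≤ (-2 * ε) * V s + 0 := by
    intro s hs
    rw [add_zero]
    have hstep : ∀ i, 2 * p s i *
        ((1 - p s i) * β * (∑ j, A i j * p s j) - δ * p s i)
        ≤ 2 * (β * (p s i * ∑ j, A i j * p s j) - δ * (p s i) ^ 2) := by
      intro i
      have hpi := hrange s hs i
      have hSnn : 0 ≤ ∑ j, A i j * p s j :=
        Finset.sum_nonneg fun j _ => mul_nonneg (hAnonneg i j) (hrange s hs j).1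
      nlinarith [hpi.1, hpi.2, mul_nonneg hβ.le hSnn]
    set q : Fin n → ℝ := fun i => p s i with hq
    have hAq : dotProduct q (A.mulVec q) = ∑ i, p s i * ∑ j, A i j * p s j := by
      simp [dotProduct, Matrix.mulVec, hq]
    have hqq : dotProduct q q = V s := by simp [dotProduct, hq, hVdef, sq]
    have hray : dotProduct q (A.mulVec q) ≤ μ * V s := by
      rw [← hqq]; exact rayleigh_bound A hA hμle q
    calc W s ≤ ∑ i, 2 * (β * (p s i * ∑ j, A i j * p s j) - δ * (p s i) ^ 2) :=
          Finset.sum_le_sum fun i _ => hstep i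
      _ = 2 * β * (dotProduct q (A.mulVec q)) - 2 * δ * V s := by
          rw [hAq]
          simp only [hVdef]
          rw [Finset.mul_sum, Finset.mul_sum, ← Finset.sum_sub_distrib]
          exact Finset.sum_congr rfl fun i _ => by ring
      _ ≤ (-2 * ε) * V s := by
          rw [hεdef]
          nlinarith [hray, hβ.le, mul_le_mul_of_nonneg_left hray hβ.le]
  -- Grönwall
  have hcont : ContinuousOn V (Set.Icc 0 t) := fun s hs =>
    ((hVderiv s hs.1).continuousAt).continuousWithinAt
  have hslope : ∀ x ∈ Set.Ico (0 : ℝ) t, ∀ r, W x < r →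
      ∃ᶠ z in nhdsWithin x (Set.Ioi x), (z - x)⁻¹ * (V z - V x) < r := fun x hx r hr =>
    ((hVderiv x hx.1).hasDerivWithinAt).liminf_right_slope_le hr
  have hg := le_gronwallBound_of_liminf_deriv_right_le hcont hslope (le_refl (V 0))
    (fun x hx => hbound x hx.1) t ⟨ht, le_refl t⟩
  rw [gronwallBound_ε0, sub_zero] at hg
  -- conclude
  have h1 : ‖p t‖ ^ 2 ≤ (‖p 0‖ * Real.exp (-ε * t)) ^ 2 := by
    rw [hnorm t, hnorm 0, Real.sq_sqrt (hVnonneg t), mul_pow, Real.sq_sqrt (hVnonneg 0),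
      ← Real.exp_nat_mul]
    have harg : (-2 : ℝ) * ε * t = (2 : ℕ) * (-ε * t) := by push_cast; ring
    rw [← harg]
    exact hg
  have hrhs : 0 ≤ ‖p 0‖ * Real.exp (-ε * t) := by positivity
  rw [one_mul]
  nlinarith [norm_nonneg (p t), h1, hrhs]
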